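/- Let a, b, x be real numbers with 0 < a ≤ b and 0 < b·x < π. Then 0 ≤ b·coth(b·x) − a·coth(a·x) ≤ (x/3)·(b² − a²) − (x³/45)·(b⁴ − a⁴) + (2x⁵/945)·(b⁶ − a⁶), where coth t = cosh t / sinh t. -/

import Mathlib

open Real

private lemma aux_nonneg (B : ℝ) (u u' : ℝ → ℝ)
    (hu : ∀ t, HasDerivAt u (u' t) t) (h0 : 0 ≤ u 0)
    (h' : ∀ t, 0 ≤ t → t ≤ B → 0 ≤ u' t) :
    ∀ t, 0 ≤ t → t ≤ B → 0 ≤ u t := by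
  intro t ht htB
  have hmono : MonotoneOn u (Set.Icc 0 B) :=
    monotoneOn_of_deriv_nonneg (convex_Icc 0 B)
      (fun s _ => (hu s).continuousAt.continuousWithinAt)
      (fun s _ => (hu s).differentiableAt.differentiableWithinAt)
      (fun s hs => by
        rw [(hu s).deriv]
        rw [interior_Icc] at hs
        exact h' s hs.1.le hs.2.le)
  have := hmono (Set.mem_Icc.mpr ⟨le_rfl, ht.trans htB⟩) (Set.mem_Icc.mpr ⟨ht, htB⟩) ht
  linarith

private lemma hd_odd (c1 c3 c5 c7 c9 c11 : ℝ) (s : ℝ) :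
    HasDerivAt (fun t : ℝ => c1*t + c3*t^3 + c5*t^5 + c7*t^7 + c9*t^9 + c11*t^11)
      (c1 + 3*c3*s^2 + 5*c5*s^4 + 7*c7*s^6 + 9*c9*s^8 + 11*c11*s^10) s := by
  have h := (((((((hasDerivAt_id s).const_mul c1).add
      ((hasDerivAt_pow 3 s).const_mul c3)).add
      ((hasDerivAt_pow 5 s).const_mul c5)).add
      ((hasDerivAt_pow 7 s).const_mul c7)).add
      ((hasDerivAt_pow 9 s).const_mul c9)).add
      ((hasDerivAt_pow 11 s).const_mul c11))
  refine h.congr_deriv ?_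
  push_cast
  ring

private lemma hd_even (c0 c2 c4 c6 c8 c10 : ℝ) (s : ℝ) :
    HasDerivAt (fun t : ℝ => c0 + c2*t^2 + c4*t^4 + c6*t^6 + c8*t^8 + c10*t^10)
      (2*c2*s + 4*c4*s^3 + 6*c6*s^5 + 8*c8*s^7 + 10*c10*s^9) s := by
  have h := ((((((hasDerivAt_pow 2 s).const_mul c2).const_add c0).add
      ((hasDerivAt_pow 4 s).const_mul c4)).add
      ((hasDerivAt_pow 6 s).const_mul c6)).add
      ((hasDerivAt_pow 8 s).const_mul c8)).add
      ((hasDerivAt_pow 10 s).const_mul c10)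
  refine h.congr_deriv ?_
  push_cast
  ring

private lemma step_sinh_le (B c1 c3 c5 c7 c9 c11 : ℝ)
    (h : ∀ s, 0 ≤ s → s ≤ B →
      Real.cosh s ≤ c1 + 3*c3*s^2 + 5*c5*s^4 + 7*c7*s^6 + 9*c9*s^8 + 11*c11*s^10) :
    ∀ t, 0 ≤ t → t ≤ B →
      Real.sinh t ≤ c1*t + c3*t^3 + c5*t^5 + c7*t^7 + c9*t^9 + c11*t^11 := by
  intro t ht htB
  have key := aux_nonneg B
      (fun t => (c1*t + c3*t^3 + c5*t^5 + c7*t^7 + c9*t^9 + c11*t^11) - Real.sinh t)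
      (fun s => (c1 + 3*c3*s^2 + 5*c5*s^4 + 7*c7*s^6 + 9*c9*s^8 + 11*c11*s^10) - Real.cosh s)
      (fun s => (hd_odd c1 c3 c5 c7 c9 c11 s).sub (Real.hasDerivAt_sinh s))
      (by norm_num [Real.sinh_zero])
      (fun s hs hsB => by have := h s hs hsB; linarith)
      t ht htB
  linarith

private lemma step_cosh_le (B c2 c4 c6 c8 c10 : ℝ)
    (h : ∀ s, 0 ≤ s → s ≤ B →
      Real.sinh s ≤ 2*c2*s + 4*c4*s^3 + 6*c6*s^5 + 8*c8*s^7 + 10*c10*s^9) :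
    ∀ t, 0 ≤ t → t ≤ B →
      Real.cosh t ≤ 1 + c2*t^2 + c4*t^4 + c6*t^6 + c8*t^8 + c10*t^10 := by
  intro t ht htB
  have key := aux_nonneg B
      (fun t => (1 + c2*t^2 + c4*t^4 + c6*t^6 + c8*t^8 + c10*t^10) - Real.cosh t)
      (fun s => (2*c2*s + 4*c4*s^3 + 6*c6*s^5 + 8*c8*s^7 + 10*c10*s^9) - Real.sinh s)
      (fun s => (hd_even 1 c2 c4 c6 c8 c10 s).sub (Real.hasDerivAt_cosh s))
      (by norm_num [Real.cosh_zero])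
      (fun s hs hsB => by have := h s hs hsB; linarith)
      t ht htB
  linarith

private lemma step_sinh_ge (B c1 c3 c5 c7 c9 c11 : ℝ)
    (h : ∀ s, 0 ≤ s → s ≤ B →
      c1 + 3*c3*s^2 + 5*c5*s^4 + 7*c7*s^6 + 9*c9*s^8 + 11*c11*s^10 ≤ Real.cosh s) :
    ∀ t, 0 ≤ t → t ≤ B →
      c1*t + c3*t^3 + c5*t^5 + c7*t^7 + c9*t^9 + c11*t^11 ≤ Real.sinh t := by
  intro t ht htB
  have key := aux_nonneg B
      (fun t => Real.sinh t - (c1*t + c3*t^3 + c5*t^5 + c7*t^7 + c9*t^9 + c11*t^11))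
      (fun s => Real.cosh s - (c1 + 3*c3*s^2 + 5*c5*s^4 + 7*c7*s^6 + 9*c9*s^8 + 11*c11*s^10))
      (fun s => (Real.hasDerivAt_sinh s).sub (hd_odd c1 c3 c5 c7 c9 c11 s))
      (by norm_num [Real.sinh_zero])
      (fun s hs hsB => by have := h s hs hsB; linarith)
      t ht htB
  linarith

private lemma step_cosh_ge (B c2 c4 c6 c8 c10 : ℝ)
    (h : ∀ s, 0 ≤ s → s ≤ B →
      2*c2*s + 4*c4*s^3 + 6*c6*s^5 + 8*c8*s^7 + 10*c10*s^9 ≤ Real.sinh s) :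
    ∀ t, 0 ≤ t → t ≤ B →
      1 + c2*t^2 + c4*t^4 + c6*t^6 + c8*t^8 + c10*t^10 ≤ Real.cosh t := by
  intro t ht htB
  have key := aux_nonneg B
      (fun t => Real.cosh t - (1 + c2*t^2 + c4*t^4 + c6*t^6 + c8*t^8 + c10*t^10))
      (fun s => Real.sinh s - (2*c2*s + 4*c4*s^3 + 6*c6*s^5 + 8*c8*s^7 + 10*c10*s^9))
      (fun s => (Real.hasDerivAt_cosh s).sub (hd_even 1 c2 c4 c6 c8 c10 s))
      (by norm_num [Real.cosh_zero])
      (fun s hs hsB => by have := h s hs hsB; linarith)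
      t ht htB
  linarith

/-- lower bound for sinh: degree 9 Taylor polynomial -/
private lemma sinh_lb (t : ℝ) (ht : 0 ≤ t) :
    t + t^3/6 + t^5/120 + t^7/5040 + t^9/362880 ≤ Real.sinh t := by
  have c2 : ∀ s, (0:ℝ) ≤ s → s ≤ t → 1 + (1/2)*s^2 + (1/24)*s^4 + (1/720)*s^6 + (1/40320)*s^8 + 0*s^10 ≤ Real.cosh s := by
    have s1 : ∀ s, (0:ℝ) ≤ s → s ≤ t →
        1*s + (1/6)*s^3 + (1/120)*s^5 + (1/5040)*s^7 + 0*s^9 + 0*s^11 ≤ Real.sinh s := by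
      have s2 : ∀ s, (0:ℝ) ≤ s → s ≤ t → 1 + (1/2)*s^2 + (1/24)*s^4 + (1/720)*s^6 + 0*s^8 + 0*s^10 ≤ Real.cosh s := by
        have s3 : ∀ s, (0:ℝ) ≤ s → s ≤ t →
            1*s + (1/6)*s^3 + (1/120)*s^5 + 0*s^7 + 0*s^9 + 0*s^11 ≤ Real.sinh s := by
          have s4 : ∀ s, (0:ℝ) ≤ s → s ≤ t → 1 + (1/2)*s^2 + (1/24)*s^4 + 0*s^6 + 0*s^8 + 0*s^10 ≤ Real.cosh s := by
            have s5 : ∀ s, (0:ℝ) ≤ s → s ≤ t →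
                1*s + (1/6)*s^3 + 0*s^5 + 0*s^7 + 0*s^9 + 0*s^11 ≤ Real.sinh s := by
              have s6 : ∀ s, (0:ℝ) ≤ s → s ≤ t → 1 + (1/2)*s^2 + 0*s^4 + 0*s^6 + 0*s^8 + 0*s^10 ≤ Real.cosh s := by
                apply step_cosh_ge
                intro s hs _
                have := Real.self_le_sinh_iff.mpr hs
                linarith
              apply step_sinh_ge
              intro s hs hsB
              have := s6 s hs hsB
              linarith
            apply step_cosh_ge
            intro s hs hsB
            have := s5 s hs hsB
            linarith
          apply step_sinh_ge
          intro s hs hsB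
          have := s4 s hs hsB
          linarith
        apply step_cosh_ge
        intro s hs hsB
        have := s3 s hs hsB
        linarith
      apply step_sinh_ge
      intro s hs hsB
      have := s2 s hs hsB
      linarith
    apply step_cosh_ge
    intro s hs hsB
    have := s1 s hs hsB
    linarith
  have h := step_sinh_ge t 1 (1/6) (1/120) (1/5040) (1/362880) 0
      (fun s hs hsB => by have := c2 s hs hsB; linarith) t ht le_rfl
  linarith

private lemma cosh_le_24 : ∀ t : ℝ, 0 ≤ t → t ≤ 3.15 → Real.cosh t ≤ 24 := by
  intro t ht htB
  have h1 : Real.cosh t ≤ Real.exp t := by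
    rw [Real.cosh_eq]
    have h2 : Real.exp (-t) ≤ Real.exp t := Real.exp_le_exp.mpr (by linarith)
    linarith
  have h2 : Real.exp t ≤ Real.exp 3.15 := Real.exp_le_exp.mpr htB
  have h3 : Real.exp (3.15:ℝ) = Real.exp 1 * Real.exp 1 * Real.exp 1 * Real.exp 0.15 := by
    rw [← Real.exp_add, ← Real.exp_add, ← Real.exp_add]; norm_num
  have h5 : (0.85:ℝ) ≤ Real.exp (-0.15) := by
    have := Real.add_one_le_exp (-0.15:ℝ)
    linarith
  have h6 : (0:ℝ) < Real.exp 0.15 := Real.exp_pos _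
  have h7 : Real.exp (0.15:ℝ) * Real.exp (-0.15:ℝ) = 1 := by
    rw [← Real.exp_add]; norm_num
  have h4 : Real.exp (0.15:ℝ) ≤ 1/0.85 := by nlinarith
  have he : Real.exp 1 ≤ 2.72 := (Real.exp_one_lt_d9.trans (by norm_num)).le
  have he0 : (0:ℝ) < Real.exp 1 := Real.exp_pos 1
  have hb : Real.exp 1 * Real.exp 1 * Real.exp 1 * Real.exp 0.15 ≤ 2.72 * 2.72 * 2.72 * (1/0.85) := by
    gcongr
  nlinarith

/-- upper bound for cosh on [0, 3.15] -/
private lemma cosh_ub : ∀ t : ℝ, 0 ≤ t → t ≤ 3.15 →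
    Real.cosh t ≤ 1 + (1/2)*t^2 + (1/24)*t^4 + (1/720)*t^6 + (1/40320)*t^8 + (1/151200)*t^10 := by
  have u1 : ∀ s, (0:ℝ) ≤ s → s ≤ 3.15 →
      Real.sinh s ≤ 24*s + 0*s^3 + 0*s^5 + 0*s^7 + 0*s^9 + 0*s^11 := by
    apply step_sinh_le
    intro s hs hsB
    have := cosh_le_24 s hs hsB
    linarith
  have u2 : ∀ s, (0:ℝ) ≤ s → s ≤ 3.15 →
      Real.cosh s ≤ 1 + 12*s^2 + 0*s^4 + 0*s^6 + 0*s^8 + 0*s^10 := by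
    apply step_cosh_le
    intro s hs hsB
    have := u1 s hs hsB
    linarith
  have u3 : ∀ s, (0:ℝ) ≤ s → s ≤ 3.15 →
      Real.sinh s ≤ 1*s + 4*s^3 + 0*s^5 + 0*s^7 + 0*s^9 + 0*s^11 := by
    apply step_sinh_le
    intro s hs hsB
    have := u2 s hs hsB
    linarith
  have u4 : ∀ s, (0:ℝ) ≤ s → s ≤ 3.15 →
      Real.cosh s ≤ 1 + (1/2)*s^2 + 1*s^4 + 0*s^6 + 0*s^8 + 0*s^10 := by
    apply step_cosh_le
    intro s hs hsB
    have := u3 s hs hsB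
    linarith
  have u5 : ∀ s, (0:ℝ) ≤ s → s ≤ 3.15 →
      Real.sinh s ≤ 1*s + (1/6)*s^3 + (1/5)*s^5 + 0*s^7 + 0*s^9 + 0*s^11 := by
    apply step_sinh_le
    intro s hs hsB
    have := u4 s hs hsB
    linarith
  have u6 : ∀ s, (0:ℝ) ≤ s → s ≤ 3.15 →
      Real.cosh s ≤ 1 + (1/2)*s^2 + (1/24)*s^4 + (1/30)*s^6 + 0*s^8 + 0*s^10 := by
    apply step_cosh_le
    intro s hs hsB
    have := u5 s hs hsB
    linarith
  have u7 : ∀ s, (0:ℝ) ≤ s → s ≤ 3.15 →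
      Real.sinh s ≤ 1*s + (1/6)*s^3 + (1/120)*s^5 + (1/210)*s^7 + 0*s^9 + 0*s^11 := by
    apply step_sinh_le
    intro s hs hsB
    have := u6 s hs hsB
    linarith
  have u8 : ∀ s, (0:ℝ) ≤ s → s ≤ 3.15 →
      Real.cosh s ≤ 1 + (1/2)*s^2 + (1/24)*s^4 + (1/720)*s^6 + (1/1680)*s^8 + 0*s^10 := by
    apply step_cosh_le
    intro s hs hsB
    have := u7 s hs hsB
    linarith
  have u9 : ∀ s, (0:ℝ) ≤ s → s ≤ 3.15 →
      Real.sinh s ≤ 1*s + (1/6)*s^3 + (1/120)*s^5 + (1/5040)*s^7 + (1/15120)*s^9 + 0*s^11 := by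
    apply step_sinh_le
    intro s hs hsB
    have := u8 s hs hsB
    linarith
  have u10 := step_cosh_le 3.15 (1/2) (1/24) (1/720) (1/40320) (1/151200)
      (fun s hs hsB => by have := u9 s hs hsB; linarith)
  intro t ht htB
  exact u10 t ht htB

/-- upper bound for sinh on [0, 3.15] -/
private lemma sinh_ub : ∀ t : ℝ, 0 ≤ t → t ≤ 3.15 →
    Real.sinh t ≤ t + (1/6)*t^3 + (1/120)*t^5 + (1/5040)*t^7 + (1/362880)*t^9 + (1/1663200)*t^11 := by
  intro t ht htB
  have h := step_sinh_le 3.15 1 (1/6) (1/120) (1/5040) (1/362880) (1/1663200)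
      (fun s hs hsB => by have := cosh_ub s hs hsB; linarith) t ht htB
  linarith

private lemma psi_nonneg (t : ℝ) (ht : 0 ≤ t) (htB : t ≤ 3.15) :
    0 ≤ (2*t/3 - 4*t^3/45 + 4*t^5/315) * Real.sinh t ^ 2 - Real.sinh t * Real.cosh t + t := by
  have hSl := sinh_lb t ht
  have hSu := sinh_ub t ht htB
  have hCu := cosh_ub t ht htB
  have hS0 : 0 ≤ Real.sinh t := Real.sinh_nonneg_iff.mpr ht
  have hC0 : (0:ℝ) < Real.cosh t := Real.cosh_pos t
  have hSl0 : 0 ≤ t + t^3/6 + t^5/120 + t^7/5040 + t^9/362880 := by positivity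
  have hq : 0 ≤ 2*t/3 - 4*t^3/45 + 4*t^5/315 := by
    nlinarith [mul_nonneg ht (sq_nonneg (t^2 - 7/2)), ht]
  have hSl2 : (t + t^3/6 + t^5/120 + t^7/5040 + t^9/362880)^2 ≤ Real.sinh t ^ 2 :=
    pow_le_pow_left₀ hSl0 hSl 2
  have h1 : (2*t/3 - 4*t^3/45 + 4*t^5/315) * (t + t^3/6 + t^5/120 + t^7/5040 + t^9/362880)^2
      ≤ (2*t/3 - 4*t^3/45 + 4*t^5/315) * Real.sinh t ^ 2 :=
    mul_le_mul_of_nonneg_left hSl2 hq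
  have hV0 : 0 ≤ t + (1/6)*t^3 + (1/120)*t^5 + (1/5040)*t^7 + (1/362880)*t^9 + (1/1663200)*t^11 := by
    positivity
  have h2 : Real.sinh t * Real.cosh t ≤
      (t + (1/6)*t^3 + (1/120)*t^5 + (1/5040)*t^7 + (1/362880)*t^9 + (1/1663200)*t^11) *
      (1 + (1/2)*t^2 + (1/24)*t^4 + (1/720)*t^6 + (1/40320)*t^8 + (1/151200)*t^10) :=
    mul_le_mul hSu hCu hC0.le hV0
  have h3 : 0 ≤ (2*t/3 - 4*t^3/45 + 4*t^5/315) * (t + t^3/6 + t^5/120 + t^7/5040 + t^9/362880)^2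
      - (t + (1/6)*t^3 + (1/120)*t^5 + (1/5040)*t^7 + (1/362880)*t^9 + (1/1663200)*t^11) *
        (1 + (1/2)*t^2 + (1/24)*t^4 + (1/720)*t^6 + (1/40320)*t^8 + (1/151200)*t^10) + t := by
    have hkey : (2*t/3 - 4*t^3/45 + 4*t^5/315) * (t + t^3/6 + t^5/120 + t^7/5040 + t^9/362880)^2
      - (t + (1/6)*t^3 + (1/120)*t^5 + (1/5040)*t^7 + (1/362880)*t^9 + (1/1663200)*t^11) *
        (1 + (1/2)*t^2 + (1/24)*t^4 + (1/720)*t^6 + (1/40320)*t^8 + (1/151200)*t^10) + t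
      = t^9 * ((8/4725) + (10289/29937600)*t^2 + (718913/25147584000)*t^4
          + (52207/37721376000)*t^6 + (35881/804722688000)*t^8 + (72841/76046294016000)*t^10
          + (5267/570347205120000)*t^12 + (1/10369949184000)*t^14) := by
      ring
    rw [hkey]
    positivity
  linarith

private lemma hasDerivAt_F (u : ℝ) (hu : 0 < u) :
    HasDerivAt (fun t => t * Real.cosh t / Real.sinh t)
      (((1*Real.cosh u + u*Real.sinh u) * Real.sinh u - u * Real.cosh u * Real.cosh u)
        / Real.sinh u ^ 2) u :=
  ((hasDerivAt_id u).mul (Real.hasDerivAt_cosh u)).div (Real.hasDerivAt_sinh u)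
    (ne_of_gt (Real.sinh_pos_iff.mpr hu))

private lemma F_le (s T : ℝ) (hs : 0 < s) (hsT : s ≤ T) :
    s * Real.cosh s / Real.sinh s ≤ T * Real.cosh T / Real.sinh T := by
  have hmono : MonotoneOn (fun t => t * Real.cosh t / Real.sinh t) (Set.Icc s T) := by
    apply monotoneOn_of_deriv_nonneg (convex_Icc s T)
    · intro u hu
      exact (hasDerivAt_F u (lt_of_lt_of_le hs hu.1)).continuousAt.continuousWithinAt
    · intro u hu
      rw [interior_Icc] at hu
      exact (hasDerivAt_F u (lt_of_lt_of_le hs hu.1.le)).differentiableAt.differentiableWithinAt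
    · intro u hu
      rw [interior_Icc] at hu
      have hu0 : 0 < u := lt_of_lt_of_le hs hu.1.le
      rw [(hasDerivAt_F u hu0).deriv]
      apply div_nonneg _ (sq_nonneg _)
      have h1 : u ≤ Real.sinh u := Real.self_le_sinh_iff.mpr hu0.le
      have h2 : 1 ≤ Real.cosh u := Real.one_le_cosh u
      have h3 := Real.cosh_sq_sub_sinh_sq u
      have h4 : u * (Real.cosh u ^ 2 - Real.sinh u ^ 2) = u := by rw [h3]; ring
      nlinarith [mul_le_mul_of_nonneg_left h2 (Real.sinh_nonneg_iff.mpr hu0.le)]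
  exact hmono (Set.mem_Icc.mpr ⟨le_rfl, hsT⟩) (Set.mem_Icc.mpr ⟨hsT, le_rfl⟩) hsT

private lemma H_le (s T : ℝ) (hs : 0 < s) (hsT : s ≤ T) (hT : T ≤ 3.15) :
    (0 + (1/3)*s^2 + (-1/45)*s^4 + (2/945)*s^6 + 0*s^8 + 0*s^10) - s * Real.cosh s / Real.sinh s ≤
    (0 + (1/3)*T^2 + (-1/45)*T^4 + (2/945)*T^6 + 0*T^8 + 0*T^10) - T * Real.cosh T / Real.sinh T := by
  have hD : ∀ u : ℝ, 0 < u → HasDerivAt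
      (fun t => (0 + (1/3)*t^2 + (-1/45)*t^4 + (2/945)*t^6 + 0*t^8 + 0*t^10)
        - t * Real.cosh t / Real.sinh t)
      ((2*(1/3)*u + 4*(-1/45)*u^3 + 6*(2/945)*u^5 + 8*0*u^7 + 10*0*u^9)
        - ((1*Real.cosh u + u*Real.sinh u) * Real.sinh u - u * Real.cosh u * Real.cosh u)
          / Real.sinh u ^ 2) u :=
    fun u hu => (hd_even 0 (1/3) (-1/45) (2/945) 0 0 u).sub (hasDerivAt_F u hu)
  have hmono : MonotoneOn
      (fun t => (0 + (1/3)*t^2 + (-1/45)*t^4 + (2/945)*t^6 + 0*t^8 + 0*t^10)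
        - t * Real.cosh t / Real.sinh t) (Set.Icc s T) := by
    apply monotoneOn_of_deriv_nonneg (convex_Icc s T)
    · intro u hu
      exact (hD u (lt_of_lt_of_le hs hu.1)).continuousAt.continuousWithinAt
    · intro u hu
      rw [interior_Icc] at hu
      exact (hD u (lt_of_lt_of_le hs hu.1.le)).differentiableAt.differentiableWithinAt
    · intro u hu
      rw [interior_Icc] at hu
      have hu0 : 0 < u := lt_of_lt_of_le hs hu.1.le
      rw [(hD u hu0).deriv]
      rw [sub_nonneg]
      have hS2 : (0:ℝ) < Real.sinh u ^ 2 := by positivity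
      rw [div_le_iff₀ hS2]
      have hψ := psi_nonneg u hu0.le (le_trans hu.2.le hT)
      have h3 := Real.cosh_sq_sub_sinh_sq u
      have h4 : u * (Real.cosh u ^ 2 - Real.sinh u ^ 2) = u := by rw [h3]; ring
      nlinarith [hψ, h4]
  exact hmono (Set.mem_Icc.mpr ⟨le_rfl, hsT⟩) (Set.mem_Icc.mpr ⟨hsT, le_rfl⟩) hsT

/-- For `0 < a ≤ b` and `0 < b·x < π`,
`0 ≤ b·coth(b·x) − a·coth(a·x)
   ≤ (x/3)·(b² − a²) − (x³/45)·(b⁴ − a⁴) + (2x⁵/945)·(b⁶ − a⁶)`. -/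
theorem stmt_19 (a b x : ℝ) (ha : 0 < a) (hab : a ≤ b)
    (hx : 0 < b * x) (hxπ : b * x < π) :
    0 ≤ b * (cosh (b * x) / sinh (b * x)) - a * (cosh (a * x) / sinh (a * x)) ∧
    b * (cosh (b * x) / sinh (b * x)) - a * (cosh (a * x) / sinh (a * x)) ≤
      (x / 3) * (b ^ 2 - a ^ 2) - (x ^ 3 / 45) * (b ^ 4 - a ^ 4) +
        (2 * x ^ 5 / 945) * (b ^ 6 - a ^ 6) := by
  have hb : 0 < b := lt_of_lt_of_le ha hab
  have hx0 : 0 < x := by nlinarith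
  have h1 : 0 < a * x := mul_pos ha hx0
  have h2 : a * x ≤ b * x := by nlinarith
  have h3 : b * x ≤ 3.15 := le_trans hxπ.le Real.pi_lt_d2.le
  have hF := F_le (a*x) (b*x) h1 h2
  have hH := H_le (a*x) (b*x) h1 h2 h3
  constructor
  · have e : x * (b * (cosh (b*x)/sinh (b*x)) - a * (cosh (a*x)/sinh (a*x)))
        = (b*x) * Real.cosh (b*x) / Real.sinh (b*x) - (a*x) * Real.cosh (a*x) / Real.sinh (a*x) := by
      ring
    have hx' : x * 0 ≤ x * (b * (cosh (b*x)/sinh (b*x)) - a * (cosh (a*x)/sinh (a*x))) := by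
      rw [mul_zero, e]
      linarith
    exact le_of_mul_le_mul_left hx' hx0
  · have e2 : x * (b * (cosh (b*x)/sinh (b*x)) - a * (cosh (a*x)/sinh (a*x)))
        = (b*x) * Real.cosh (b*x) / Real.sinh (b*x) - (a*x) * Real.cosh (a*x) / Real.sinh (a*x) := by
      ring
    have e3 : x * ((x / 3) * (b ^ 2 - a ^ 2) - (x ^ 3 / 45) * (b ^ 4 - a ^ 4) +
          (2 * x ^ 5 / 945) * (b ^ 6 - a ^ 6))
        = (0 + (1/3)*(b*x)^2 + (-1/45)*(b*x)^4 + (2/945)*(b*x)^6 + 0*(b*x)^8 + 0*(b*x)^10)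
          - (0 + (1/3)*(a*x)^2 + (-1/45)*(a*x)^4 + (2/945)*(a*x)^6 + 0*(a*x)^8 + 0*(a*x)^10) := by
      ring
    have hx' : x * (b * (cosh (b*x)/sinh (b*x)) - a * (cosh (a*x)/sinh (a*x)))
        ≤ x * ((x / 3) * (b ^ 2 - a ^ 2) - (x ^ 3 / 45) * (b ^ 4 - a ^ 4) +
          (2 * x ^ 5 / 945) * (b ^ 6 - a ^ 6)) := by
      rw [e2, e3]
      linarith
    exact le_of_mul_le_mul_left hx' hx0
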